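/- Let (X,τ,d) be an extended metric-topological space. Let LIP_b(X,τ,d) be the normed algebra of bounded τ-continuous d-Lipschitz real functions on X with the supremum norm, let X̂ be its set of characters (nonzero bounded multiplicative linear functionals), endowed with the weak* topology τ̂ and with the extended distance d̂(θ,σ) := sup{|θ(f)−σ(f)| : f ∈ LIP_{b,1}(X,τ,d)}, and let ι̂ : X → X̂ be the evaluation map ι̂(x)(f) = f(x). Assume that ι̂(X) is weak*-dense in X̂. Then for every compact extended metric-topological space (Y,τ_Y,d_Y) and every continuous-short map φ : (X,τ,d) → (Y,τ_Y,d_Y) there exists a unique map φ̂ : X̂ → Y that is continuous from τ̂ to τ_Y, satisfies d_Y(φ̂(θ),φ̂(σ)) ≤ d̂(θ,σ) for all θ,σ ∈ X̂, and satisfies φ̂ ∘ ι̂ = φ. -/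

import Mathlib

open scoped ENNReal

universe u v w

/-- An extended pseudodistance on `X`. -/
structure IsExtPseudoDist {X : Type*} (d : X → X → ℝ≥0∞) : Prop where
  refl : ∀ x, d x x = 0
  symm : ∀ x y, d x y = d y x
  triangle : ∀ x y z, d x y ≤ d x z + d z y

/-- An extended distance on `X`. -/
structure IsExtDist {X : Type*} (d : X → X → ℝ≥0∞) : Prop where
  eq_zero_iff : ∀ x y, d x y = 0 ↔ x = y
  symm : ∀ x y, d x y = d y x
  triangle : ∀ x y z, d x y ≤ d x z + d z y

/-- `LIP_{b,1}(X,τ,d)`: bounded `τ`-continuous functions `f : X → ℝ` with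
`|f x - f y| ≤ d x y`. -/
def Lip1 {X : Type*} (τ : TopologicalSpace X) (d : X → X → ℝ≥0∞) : Set (X → ℝ) :=
  {f | @Continuous X ℝ τ _ f ∧ (∃ C : ℝ, ∀ x, |f x| ≤ C) ∧
    ∀ x y, ENNReal.ofReal |f x - f y| ≤ d x y}

/-- `(X,τ,d)` is an extended metric-topological space. -/
def IsEMT {X : Type*} (τ : TopologicalSpace X) (d : X → X → ℝ≥0∞) : Prop :=
  IsExtDist d ∧
  τ = (⨅ f ∈ Lip1 τ d, TopologicalSpace.induced f inferInstance) ∧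
  (∀ x y, d x y = ⨆ f ∈ Lip1 τ d, ENNReal.ofReal |f x - f y|)

/-- A continuous-short map between (pre-)extended (pseudo)metric-topological spaces. -/
def ContinuousShort {X Y : Type*} (τX : TopologicalSpace X) (dX : X → X → ℝ≥0∞)
    (τY : TopologicalSpace Y) (dY : Y → Y → ℝ≥0∞) (φ : X → Y) : Prop :=
  @Continuous X Y τX τY φ ∧ ∀ x y, dY (φ x) (φ y) ≤ dX x y

/-- `LIP_b(X,τ,d)`: bounded `τ`-continuous `d`-Lipschitz functions `f : X → ℝ`. -/
def LipB {X : Type*} (τ : TopologicalSpace X) (d : X → X → ℝ≥0∞) : Set (X → ℝ) :=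
  {f | @Continuous X ℝ τ _ f ∧ (∃ C : ℝ, ∀ x, |f x| ≤ C) ∧
    ∃ L : ℝ, 0 ≤ L ∧ ∀ x y, ENNReal.ofReal |f x - f y| ≤ ENNReal.ofReal L * d x y}

/-- A character of the normed algebra `LIP_b(X,τ,d)` (with the supremum norm): a nonzero
norm-bounded linear multiplicative functional. -/
def IsCharacter {X : Type*} (τ : TopologicalSpace X) (d : X → X → ℝ≥0∞)
    (θ : LipB τ d → ℝ) : Prop :=
  (∀ f g h : LipB τ d, (h : X → ℝ) = (f : X → ℝ) + (g : X → ℝ) → θ h = θ f + θ g) ∧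
  (∀ (c : ℝ) (f h : LipB τ d), (h : X → ℝ) = c • (f : X → ℝ) → θ h = c * θ f) ∧
  (∀ f g h : LipB τ d, (h : X → ℝ) = (f : X → ℝ) * (g : X → ℝ) → θ h = θ f * θ g) ∧
  (∃ C : ℝ, ∀ f : LipB τ d, |θ f| ≤ C * (⨆ x, |(f : X → ℝ) x|)) ∧
  (∃ f : LipB τ d, θ f ≠ 0)

/-- The Gelfand compactification `X̂`: the set of characters of `LIP_b(X,τ,d)`. -/
def Ghat {X : Type*} (τ : TopologicalSpace X) (d : X → X → ℝ≥0∞) : Type _ :=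
  {θ : LipB τ d → ℝ // IsCharacter τ d θ}

/-- The weak* topology `τ̂` on `X̂` (the topology of pointwise convergence of functionals). -/
def GhatTop {X : Type*} (τ : TopologicalSpace X) (d : X → X → ℝ≥0∞) :
    TopologicalSpace (Ghat τ d) :=
  TopologicalSpace.induced (Subtype.val : Ghat τ d → (LipB τ d → ℝ)) Pi.topologicalSpace

/-- The extended distance `d̂(θ,σ) = sup {|θ f - σ f| : f ∈ LIP_{b,1}(X,τ,d)}` on `X̂`. -/
noncomputable def GhatDist {X : Type*} (τ : TopologicalSpace X) (d : X → X → ℝ≥0∞)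
    (θ σ : Ghat τ d) : ℝ≥0∞ :=
  ⨆ (f : LipB τ d) (_ : (f : X → ℝ) ∈ Lip1 τ d), ENNReal.ofReal |θ.1 f - σ.1 f|

section Aux

variable {X : Type u} {Y : Type v}

lemma lip1_mem_lipB {τ : TopologicalSpace X} {d : X → X → ℝ≥0∞} {f : X → ℝ}
    (hf : f ∈ Lip1 τ d) : f ∈ LipB τ d := by
  refine ⟨hf.1, hf.2.1, 1, zero_le_one, fun x y => ?_⟩
  rw [ENNReal.ofReal_one, one_mul]
  exact hf.2.2 x y

lemma comp_mem_lip1 {τ : TopologicalSpace X} {d : X → X → ℝ≥0∞}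
    {τY : TopologicalSpace Y} {dY : Y → Y → ℝ≥0∞} {φ : X → Y}
    (hφ : ContinuousShort τ d τY dY φ) {g : Y → ℝ} (hg : g ∈ Lip1 τY dY) :
    (g ∘ φ) ∈ Lip1 τ d := by
  refine ⟨hg.1.comp hφ.1, ?_, fun x y => ?_⟩
  · obtain ⟨C, hC⟩ := hg.2.1
    exact ⟨C, fun x => hC (φ x)⟩
  · exact (hg.2.2 (φ x) (φ y)).trans (hφ.2 x y)

end Aux

/-- **Universal property of the Gelfand compactification.** Let `(X,τ,d)` be an e.m.t.
space, let `ι̂ : X → X̂` be the evaluation map into the character space of `LIP_b(X,τ,d)`,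
and assume `ι̂(X)` is weak*-dense in `X̂`. Then every continuous-short map `φ` from `(X,τ,d)`
into a compact e.m.t. space `(Y,τ_Y,d_Y)` extends uniquely to a map `φ̂ : X̂ → Y` that is
continuous from `τ̂` to `τ_Y`, short from `d̂` to `d_Y`, and satisfies `φ̂ ∘ ι̂ = φ`. -/
theorem gelfand_universal_property {X : Type u} (τ : TopologicalSpace X)
    (d : X → X → ℝ≥0∞) (h : IsEMT τ d)
    (ι : X → Ghat τ d) (hι : ∀ (x : X) (f : LipB τ d), (ι x).1 f = (f : X → ℝ) x)
    (hdense : @Dense (Ghat τ d) (GhatTop τ d) (Set.range ι)) :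
    ∀ (Y : Type v) (τY : TopologicalSpace Y) (dY : Y → Y → ℝ≥0∞),
      IsEMT τY dY → @CompactSpace Y τY →
      ∀ φ : X → Y, ContinuousShort τ d τY dY φ →
        ∃! ψ : Ghat τ d → Y,
          (@Continuous (Ghat τ d) Y (GhatTop τ d) τY ψ ∧
            ∀ θ σ : Ghat τ d, dY (ψ θ) (ψ σ) ≤ GhatDist τ d θ σ) ∧
          ψ ∘ ι = φ := by
  intro Y τY dY hY hYcomp φ hφ
  letI : TopologicalSpace X := τ
  letI : TopologicalSpace Y := τY
  haveI : CompactSpace Y := hYcomp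
  letI : TopologicalSpace (Ghat τ d) := GhatTop τ d
  -- index type of Lipschitz-1 functions on Y
  let G := {g : Y → ℝ // g ∈ Lip1 τY dY}
  -- pullback of a Lip1 function on Y to an element of LipB on X
  let F : G → LipB τ d := fun g => ⟨g.1 ∘ φ, lip1_mem_lipB (comp_mem_lip1 hφ g.2)⟩
  -- the two maps into the product space
  let Θ : Ghat τ d → (G → ℝ) := fun θ g => θ.1 (F g)
  let E : Y → (G → ℝ) := fun y g => g.1 y
  have hEcont : Continuous E := continuous_pi fun g => g.2.1
  have hEinj : Function.Injective E := by
    intro y y' hyy'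
    have h0 : dY y y' = 0 := by
      rw [hY.2.2 y y']
      refine le_antisymm (iSup₂_le fun g hg => ?_) zero_le
      have hgy : g y = g y' := congrFun hyy' ⟨g, hg⟩
      simp [hgy]
    exact (hY.1.eq_zero_iff y y').mp h0
  have hΘcont : Continuous Θ := by
    refine continuous_pi fun g => ?_
    exact (continuous_apply (F g)).comp continuous_induced_dom
  have hΘι : ∀ x : X, Θ (ι x) = E (φ x) := by
    intro x
    funext g
    show (ι x).1 (F g) = g.1 (φ x)
    rw [hι x (F g)]
    rfl
  have hrange : ∀ θ : Ghat τ d, Θ θ ∈ Set.range E := by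
    have hSc : IsClosed (Set.range E) := (isCompact_range hEcont).isClosed
    have hsub : Set.range ι ⊆ Θ ⁻¹' (Set.range E) := by
      rintro _ ⟨x, rfl⟩
      exact ⟨φ x, (hΘι x).symm⟩
    intro θ
    exact (hSc.preimage hΘcont).closure_subset_iff.mpr hsub (hdense θ)
  let ψ : Ghat τ d → Y := fun θ => (hrange θ).choose
  have hψE : ∀ θ, E (ψ θ) = Θ θ := fun θ => (hrange θ).choose_spec
  have hψι : ψ ∘ ι = φ := by
    funext x
    exact hEinj ((hψE (ι x)).trans (hΘι x))
  have hψcont : Continuous ψ := by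
    have hEemb : Topology.IsClosedEmbedding E := hEcont.isClosedEmbedding hEinj
    have hEψ : E ∘ ψ = Θ := funext hψE
    exact hEemb.isEmbedding.continuous_iff.mpr (hEψ ▸ hΘcont)
  have hψshort : ∀ θ σ : Ghat τ d, dY (ψ θ) (ψ σ) ≤ GhatDist τ d θ σ := by
    intro θ σ
    rw [hY.2.2]
    refine iSup₂_le fun g hg => ?_
    have h1 : g (ψ θ) = θ.1 (F ⟨g, hg⟩) := congrFun (hψE θ) ⟨g, hg⟩
    have h2 : g (ψ σ) = σ.1 (F ⟨g, hg⟩) := congrFun (hψE σ) ⟨g, hg⟩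
    rw [h1, h2]
    exact le_iSup₂ (f := fun (f : LipB τ d) (_ : (f : X → ℝ) ∈ Lip1 τ d) =>
      ENNReal.ofReal |θ.1 f - σ.1 f|) (F ⟨g, hg⟩) (comp_mem_lip1 hφ hg)
  refine ⟨ψ, ⟨⟨hψcont, hψshort⟩, hψι⟩, ?_⟩
  rintro ψ' ⟨⟨hc, _⟩, hext⟩
  have hEeq : E ∘ ψ' = E ∘ ψ := by
    refine Continuous.ext_on hdense (hEcont.comp hc) (hEcont.comp hψcont) ?_
    rintro _ ⟨x, rfl⟩
    show E (ψ' (ι x)) = E (ψ (ι x))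
    rw [show ψ' (ι x) = φ x from congrFun hext x,
      show ψ (ι x) = φ x from congrFun hψι x]
  funext θ
  exact hEinj (congrFun hEeq θ)
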